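/- Let p be a prime and let Q : 𝔽_p^n → ℂ be a quadratic average of rank r. Then ‖Q‖_{U^2} ≤ p^{−r/4}. -/

import Mathlib

open scoped BigOperators

instance instNeZeroOfFactPrime (p : ℕ) [hp : Fact p.Prime] : NeZero p :=
  ⟨hp.out.ne_zero⟩

/-- The vector space `𝔽_p^n`. -/
abbrev Vec (p n : ℕ) := Fin n → ZMod p

/-- `ω^t` where `ω = e^{2πi/p}`. -/
noncomputable def omg (p : ℕ) (t : ZMod p) : ℂ :=
  Complex.exp (2 * Real.pi * Complex.I * (t.val : ℂ) / p)

/-- Average of a complex-valued function over a finite type. -/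
noncomputable def avgC {α : Type*} [Fintype α] (f : α → ℂ) : ℂ :=
  (∑ x, f x) / (Fintype.card α : ℂ)

/-- Average of a real-valued function over a finite type. -/
noncomputable def avgR {α : Type*} [Fintype α] (f : α → ℝ) : ℝ :=
  (∑ x, f x) / (Fintype.card α : ℝ)

/-- The Gowers `U²` norm. -/
noncomputable def U2 {p n : ℕ} [NeZero p] (f : Vec p n → ℂ) : ℝ :=
  ‖avgC (fun t : Vec p n × Vec p n × Vec p n =>
    f t.1 * star (f (t.1 + t.2.1)) * star (f (t.1 + t.2.2)) *
      f (t.1 + t.2.1 + t.2.2))‖ ^ ((1 : ℝ) / 4)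

/-- The Gowers `U³` norm. -/
noncomputable def U3 {p n : ℕ} [NeZero p] (f : Vec p n → ℂ) : ℝ :=
  ‖avgC (fun t : Vec p n × Vec p n × Vec p n × Vec p n =>
    f t.1 * star (f (t.1 + t.2.1)) * star (f (t.1 + t.2.2.1)) *
      f (t.1 + t.2.1 + t.2.2.1) * star (f (t.1 + t.2.2.2)) *
      f (t.1 + t.2.1 + t.2.2.2) * f (t.1 + t.2.2.1 + t.2.2.2) *
      star (f (t.1 + t.2.1 + t.2.2.1 + t.2.2.2)))‖ ^ ((1 : ℝ) / 8)

/-- `L¹` norm (with respect to the uniform probability measure). -/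
noncomputable def L1 {p n : ℕ} [NeZero p] (f : Vec p n → ℂ) : ℝ :=
  avgR (fun x => ‖f x‖)

/-- `L²` norm (with respect to the uniform probability measure). -/
noncomputable def L2 {p n : ℕ} [NeZero p] (f : Vec p n → ℂ) : ℝ :=
  Real.sqrt (avgR (fun x => ‖f x‖ ^ 2))

/-- `L∞` norm. -/
noncomputable def Linf {p n : ℕ} [NeZero p] (f : Vec p n → ℂ) : ℝ :=
  ⨆ x, ‖f x‖

/-- Normalized inner product `⟨f,g⟩ = 𝔼_x f(x) conj (g x)`. -/
noncomputable def inprod {p n : ℕ} [NeZero p] (f g : Vec p n → ℂ) : ℂ :=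
  avgC (fun x => f x * star (g x))

/-- The dual of the `U²` norm. -/
noncomputable def U2dual {p n : ℕ} [NeZero p] (g : Vec p n → ℂ) : ℝ :=
  sSup {r : ℝ | ∃ f : Vec p n → ℂ, U2 f ≤ 1 ∧ r = ‖inprod f g‖}

/-- The elements of a submodule of `𝔽_p^n` as a `Finset`. -/
noncomputable def subFinset {p n : ℕ} [NeZero p] (V : Submodule (ZMod p) (Vec p n)) :
    Finset (Vec p n) :=
  letI := Classical.decPred (fun v => v ∈ (V : Set (Vec p n)))
  Finset.univ.filter (fun v => v ∈ (V : Set (Vec p n)))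

/-- Convolution `f * μ_V`, i.e. the average of `f` over the coset `x + V`. -/
noncomputable def convMu {p n : ℕ} [NeZero p] (f : Vec p n → ℂ)
    (V : Submodule (ZMod p) (Vec p n)) (x : Vec p n) : ℂ :=
  (∑ v ∈ subFinset V, f (x + v)) / ((subFinset V).card : ℂ)

/-- The associated symmetric form `β(u,v) = q(u+v) - q(u) - q(v)`. -/
def qbeta {p n : ℕ} (q : Vec p n → ZMod p) (u v : Vec p n) : ZMod p :=
  q (u + v) - q u - q v

/-- `q` is a quadratic form on the subspace `V`: `q 0 = 0` and the associated
form `β` is (bi-)additive on `V`. -/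
def IsQuadFormOn {p n : ℕ} (V : Submodule (ZMod p) (Vec p n))
    (q : Vec p n → ZMod p) : Prop :=
  q 0 = 0 ∧ ∀ u ∈ V, ∀ v ∈ V, ∀ w ∈ V, qbeta q u (v + w) = qbeta q u v + qbeta q u w

/-- The radical `{v ∈ V : β(u,v) = 0 for all u ∈ V}` of the form associated to `q`
(as the span of that set, which equals the set itself when `q` is quadratic). -/
noncomputable def qRadical {p n : ℕ} (V : Submodule (ZMod p) (Vec p n))
    (q : Vec p n → ZMod p) : Submodule (ZMod p) (Vec p n) :=
  Submodule.span (ZMod p) {v | v ∈ V ∧ ∀ u ∈ V, qbeta q u v = 0}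

/-- The rank of the quadratic form `q` on `V`: the codimension in `V` of the radical. -/
noncomputable def qRank {p n : ℕ} (V : Submodule (ZMod p) (Vec p n))
    (q : Vec p n → ZMod p) : ℕ :=
  Module.finrank (ZMod p) V - Module.finrank (ZMod p) (qRadical V q)

/-- `Q` is a quadratic average with base `(V, q)`:
`Q(x) = 𝔼_{y ∈ x+V} ω^{q(x-y) + φ_y(x-y)}` with each `φ_y` linear on `V`.
(Parametrizing `y = x - v` with `v ∈ V`, this reads `Q(x) = 𝔼_{v ∈ V} ω^{q(v) + φ_{x-v}(v)}`.) -/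
def IsQuadAvgWith {p n : ℕ} [NeZero p] (V : Submodule (ZMod p) (Vec p n))
    (q : Vec p n → ZMod p) (Q : Vec p n → ℂ) : Prop :=
  IsQuadFormOn V q ∧
  ∃ φ : Vec p n → Vec p n → ZMod p,
    (∀ y, ∀ u ∈ V, ∀ v ∈ V, φ y (u + v) = φ y u + φ y v) ∧
    ∀ x, Q x = (∑ v ∈ subFinset V, omg p (q v + φ (x - v) v)) / ((subFinset V).card : ℂ)

/-- The radical of a bilinear form `β` restricted to the subspace `W`. -/
noncomputable def bRadical {p n : ℕ} (W : Submodule (ZMod p) (Vec p n))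
    (β : Vec p n →ₗ[ZMod p] Vec p n →ₗ[ZMod p] ZMod p) :
    Submodule (ZMod p) (Vec p n) :=
  Submodule.span (ZMod p) {y | y ∈ W ∧ ∀ x ∈ W, β x y = 0}

/-- The rank of the bilinear form `β` restricted to the subspace `W`. -/
noncomputable def bRankOn {p n : ℕ} (W : Submodule (ZMod p) (Vec p n))
    (β : Vec p n →ₗ[ZMod p] Vec p n →ₗ[ZMod p] ZMod p) : ℕ :=
  Module.finrank (ZMod p) W - Module.finrank (ZMod p) (bRadical W β)


section omg
variable (p : ℕ) [hp : Fact p.Prime]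

lemma omg_eq_pow (t : ZMod p) :
    omg p t = Complex.exp (2 * Real.pi * Complex.I / p) ^ (t.val) := by
  rw [omg, ← Complex.exp_nat_mul]
  ring_nf

lemma omg_zero : omg p (0 : ZMod p) = 1 := by
  simp [omg_eq_pow, ZMod.val_zero]

lemma omg_add (a b : ZMod p) : omg p (a + b) = omg p a * omg p b := by
  have hζ : Complex.exp (2 * Real.pi * Complex.I / p) ^ (p : ℕ) = 1 := by
    rw [← Complex.exp_nat_mul]
    rw [mul_div_cancel₀ _ (by exact_mod_cast hp.out.ne_zero : (p:ℂ) ≠ 0)]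
    rw [show (2 * ↑Real.pi * Complex.I : ℂ) = 2 * ↑Real.pi * Complex.I from rfl]
    simpa [mul_comm] using Complex.exp_two_pi_mul_I
  have : (a + b).val % p = (a.val + b.val) % p := by
    rw [ZMod.val_add, Nat.mod_mod_of_dvd]
    exact dvd_refl p
  rw [omg_eq_pow, omg_eq_pow, omg_eq_pow, ← pow_add]
  have h1 : (a+b).val = (a.val + b.val) % p := ZMod.val_add a b
  rw [h1]
  conv_rhs => rw [← Nat.div_add_mod (a.val + b.val) p]
  rw [pow_add, pow_mul, hζ, one_pow, one_mul]

lemma norm_omg (t : ZMod p) : ‖omg p t‖ = 1 := by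
  rw [omg]
  rw [Complex.norm_exp]
  have : (2 * ↑Real.pi * Complex.I * (t.val : ℂ) / p).re = 0 := by
    have : (2 * ↑Real.pi * Complex.I * (t.val : ℂ) / p) = ((2 * Real.pi * t.val / p : ℝ) : ℂ) * Complex.I := by
      push_cast; ring
    rw [this]
    simp
  rw [this, Real.exp_zero]

lemma star_omg (t : ZMod p) : star (omg p t) = omg p (-t) := by
  have h1 : omg p t * omg p (-t) = 1 := by rw [← omg_add]; simp [omg_zero]
  have h2 : omg p t ≠ 0 := by
    intro h; have := norm_omg p t; rw [h] at this; simp at this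
  calc star (omg p t) = star (omg p t) * (omg p t * omg p (-t)) := by rw [h1, mul_one]
    _ = (star (omg p t) * omg p t) * omg p (-t) := by ring
    _ = omg p (-t) := by
        have : (star (omg p t) * omg p t) = ((Complex.normSq (omg p t) : ℝ) : ℂ) := by
          rw [Complex.normSq_eq_conj_mul_self]; rfl
        rw [this, Complex.normSq_eq_norm_sq, norm_omg p t]
        norm_num

lemma omg_ne_one {t : ZMod p} (h : t ≠ 0) : omg p t ≠ 1 := by
  rw [omg_eq_pow]
  have hprim : IsPrimitiveRoot (Complex.exp (2 * Real.pi * Complex.I / p)) p := by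
    have := Complex.isPrimitiveRoot_exp p hp.out.ne_zero
    convert this using 2
  exact hprim.pow_ne_one_of_pos_of_lt (show t.val ≠ 0 by simpa [ZMod.val_eq_zero] using h) (ZMod.val_lt t)

lemma omg_sub (a b : ZMod p) : omg p (a - b) = omg p a * omg p (-b) := by
  rw [← omg_add]; ring_nf

end omg

section sub
variable {p n : ℕ} [hp : Fact p.Prime] (V : Submodule (ZMod p) (Vec p n)) [Fintype ↥V]

lemma sum_subFinset (f : Vec p n → ℂ) : ∑ v ∈ subFinset V, f v = ∑ v : ↥V, f ↑v := by
  classical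
  rw [subFinset]
  rw [Finset.sum_filter]
  rw [← Finset.sum_subtype (Finset.univ.filter (fun v => v ∈ (V : Set (Vec p n)))) (by simp) f]
  rw [Finset.sum_filter]

lemma card_subFinset : (subFinset V).card = Fintype.card ↥V := by
  classical
  rw [subFinset]
  exact (Fintype.card_of_subtype _ (fun x => by simp)).symm


lemma char_sum_zero (A : Vec p n → ZMod p)
    (hA : ∀ u ∈ V, ∀ v ∈ V, A (u + v) = A u + A v)
    (t0 : Vec p n) (ht0 : t0 ∈ V) (hne : A t0 ≠ 0) :
    ∑ v : ↥V, omg p (A ↑v) = 0 := by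
  set S := ∑ v : ↥V, omg p (A ↑v) with hS
  have key : S = omg p (A t0) * S := by
    calc S = ∑ v : ↥V, omg p (A ↑((Equiv.addLeft (⟨t0, ht0⟩ : ↥V)) v)) :=
          (Equiv.sum_comp (Equiv.addLeft (⟨t0, ht0⟩ : ↥V)) (fun v => omg p (A ↑v))).symm
      _ = ∑ v : ↥V, omg p (A t0) * omg p (A ↑v) := Finset.sum_congr rfl (fun v _ => by
            have h : ((Equiv.addLeft (⟨t0, ht0⟩ : ↥V)) v : Vec p n) = t0 + ↑v := rfl
            rw [h, hA t0 ht0 ↑v v.2, omg_add])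
      _ = omg p (A t0) * S := (Finset.mul_sum _ _ _).symm
  have h2 : (omg p (A t0) - 1) * S = 0 := by rw [sub_mul, one_mul, ← key, sub_self]
  rcases mul_eq_zero.1 h2 with h | h
  · exact absurd (by linear_combination h : omg p (A t0) = 1) (omg_ne_one p hne)
  · exact h

end sub

section beta
variable {p n : ℕ} [hp : Fact p.Prime] {V : Submodule (ZMod p) (Vec p n)}
  {q : Vec p n → ZMod p} (hq : IsQuadFormOn V q)

lemma qbeta_comm (u v : Vec p n) : qbeta q u v = qbeta q v u := by
  unfold qbeta; rw [add_comm u v]; ring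

include hq

lemma qbeta_add_left {u v w : Vec p n} (hu : u ∈ V) (hv : v ∈ V) (hw : w ∈ V) :
    qbeta q (u + v) w = qbeta q u w + qbeta q v w := by
  rw [qbeta_comm, hq.2 w hw u hu v hv, qbeta_comm u w, qbeta_comm v w]

lemma qbeta_sub_right {x a b : Vec p n} (hx : x ∈ V) (ha : a ∈ V) (hb : b ∈ V) :
    qbeta q x (a - b) = qbeta q x a - qbeta q x b := by
  have h := hq.2 x hx (a - b) (V.sub_mem ha hb) b hb
  rw [sub_add_cancel] at h
  linear_combination -h

lemma counting {w : Vec p n} (hw : w ∈ V) (c : Vec p n → ZMod p) [Fintype ↥V]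
    (P : ↥V → Prop) [DecidablePred P]
    (hP : ∀ u : ↥V, P u → ∀ t ∈ V, qbeta q t ((u : Vec p n) + w) + c t = 0) :
    ((Finset.univ : Finset ↥V).filter P).card ≤ (subFinset (qRadical V q)).card := by
  classical
  rcases ((Finset.univ : Finset ↥V).filter P).eq_empty_or_nonempty with h | ⟨u0, hu0⟩
  · simp [h]
  · have hu0' : ∀ t ∈ V, qbeta q t ((u0 : Vec p n) + w) + c t = 0 :=
      hP u0 (Finset.mem_filter.1 hu0).2
    apply Finset.card_le_card_of_injOn (fun u : ↥V => (u : Vec p n) - (u0 : Vec p n))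
    · intro u hu
      have hu' : ∀ t ∈ V, qbeta q t ((u : Vec p n) + w) + c t = 0 :=
        hP u (Finset.mem_filter.1 hu).2
      have hrad : (u : Vec p n) - (u0 : Vec p n) ∈ qRadical V q := by
        apply Submodule.subset_span
        refine ⟨V.sub_mem u.2 u0.2, fun x hx => ?_⟩
        have h1 : qbeta q x ((u : Vec p n) + w)
            = qbeta q x (((u : Vec p n) - (u0 : Vec p n)) + ((u0 : Vec p n) + w)) := by
          congr 1; abel
        have h2 : qbeta q x (((u : Vec p n) - (u0 : Vec p n)) + ((u0 : Vec p n) + w))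
            = qbeta q x ((u : Vec p n) - (u0 : Vec p n)) + qbeta q x ((u0 : Vec p n) + w) :=
          hq.2 x hx _ (V.sub_mem u.2 u0.2) _ (V.add_mem u0.2 hw)
        have h3 := hu' x hx
        have h4 := hu0' x hx
        rw [h1, h2] at h3
        linear_combination h3 - h4
      simp only [subFinset]
      simp only [Finset.mem_coe, Finset.mem_filter, Finset.mem_univ, true_and]
      exact hrad
    · intro a _ b _ hab
      have h2 : (a : Vec p n) = (b : Vec p n) := by
        have := congrArg (· + (u0 : Vec p n)) hab
        simpa using this
      exact Subtype.ext h2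

end beta

namespace Stmt6Aux

variable {p n : ℕ}

def Ef (q : Vec p n → ZMod p) (φ : Vec p n → Vec p n → ZMod p)
    (x a b v1 v2 v3 v4 : Vec p n) : ZMod p :=
  (q v1 + φ (x - v1) v1) +
    (-(q v2 + φ (x + a - v2) v2) +
      (-(q v3 + φ (x + b - v3) v3) + (q v4 + φ (x + a + b - v4) v4)))

def Af (q : Vec p n → ZMod p) (φ : Vec p n → Vec p n → ZMod p)
    (y a b w v1 : Vec p n) : ZMod p :=
  qbeta q v1 w + (φ y v1 - φ (y + a) v1 - φ (y + b) v1 + φ (y + a + b - w) v1)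

def cf (q : Vec p n → ZMod p) (φ : Vec p n → Vec p n → ZMod p)
    (y a b w u : Vec p n) : ZMod p :=
  -(q u) + (q (u + w) + (φ (y + a + b - w) (u + w) - φ (y + a) u))

def Df (q : Vec p n → ZMod p) (φ : Vec p n → Vec p n → ZMod p)
    (y a b w u t : Vec p n) : ZMod p :=
  qbeta q t (u + w) + (φ (y + a + b - w) t - φ (y + b) t)

def Psif (q : Vec p n → ZMod p) (φ : Vec p n → Vec p n → ZMod p)
    (y a b w v1 u t : Vec p n) : ZMod p :=
  (q v1 + φ y v1) +
    (-(q (v1 + u) + φ (y + a) (v1 + u)) +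
      (-(q (v1 + t) + φ (y + b) (v1 + t)) +
        (q (v1 + (t + (u + w))) + φ (y + a + b - w) (v1 + (t + (u + w))))))

lemma E_eq_Psi (q : Vec p n → ZMod p) (φ : Vec p n → Vec p n → ZMod p)
    (y a b w v1 u t : Vec p n) :
    Ef q φ (y + v1) (a + u) (b + t) v1 (v1 + u) (v1 + t) (v1 + (t + (u + w)))
      = Psif q φ y a b w v1 u t := by
  unfold Ef Psif
  have h1 : y + v1 - v1 = y := by abel
  have h2 : y + v1 + (a + u) - (v1 + u) = y + a := by abel
  have h3 : y + v1 + (b + t) - (v1 + t) = y + b := by abel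
  have h4 : y + v1 + (a + u) + (b + t) - (v1 + (t + (u + w))) = y + a + b - w := by abel
  rw [h1, h2, h3, h4]

variable {V : Submodule (ZMod p) (Vec p n)} {q : Vec p n → ZMod p}
  {φ : Vec p n → Vec p n → ZMod p}

lemma Psi_split (hq : IsQuadFormOn V q)
    (hφ : ∀ y, ∀ u ∈ V, ∀ v ∈ V, φ y (u + v) = φ y u + φ y v)
    (y a b : Vec p n) {w v1 u t : Vec p n}
    (hw : w ∈ V) (hv1 : v1 ∈ V) (hu : u ∈ V) (ht : t ∈ V) :
    Psif q φ y a b w v1 u t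
      = Af q φ y a b w v1 + (cf q φ y a b w u + Df q φ y a b w u t) := by
  have hβ1 := hq.2 v1 hv1 t ht (u + w) (V.add_mem hu hw)
  have hβ2 := hq.2 v1 hv1 u hu w hw
  have hφ4 := hφ (y + a) v1 hv1 u hu
  have hφ5 := hφ (y + b) v1 hv1 t ht
  have hφ6 := hφ (y + a + b - w) v1 hv1 (t + (u + w)) (V.add_mem ht (V.add_mem hu hw))
  have hφ7 := hφ (y + a + b - w) t ht (u + w) (V.add_mem hu hw)
  unfold Psif Af cf Df
  unfold qbeta at hβ1 hβ2 ⊢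
  linear_combination hβ1 + hβ2 - hφ4 - hφ5 + hφ6 + hφ7

end Stmt6Aux

namespace Stmt6Aux

variable {p n : ℕ} [hp : Fact p.Prime] {V : Submodule (ZMod p) (Vec p n)}

def e7 (V : Submodule (ZMod p) (Vec p n)) :
    (Vec p n × Vec p n × Vec p n × ↥V × ↥V × ↥V × ↥V)
      ≃ (Vec p n × Vec p n × Vec p n × ↥V × ↥V × ↥V × ↥V) where
  toFun z :=
    ⟨z.1 + ↑z.2.2.2.2.1, z.2.1 + ↑z.2.2.2.2.2.1, z.2.2.1 + ↑z.2.2.2.2.2.2,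
      z.2.2.2.2.1, z.2.2.2.2.1 + z.2.2.2.2.2.1, z.2.2.2.2.1 + z.2.2.2.2.2.2,
      z.2.2.2.2.1 + (z.2.2.2.2.2.2 + (z.2.2.2.2.2.1 + z.2.2.2.1))⟩
  invFun z :=
    ⟨z.1 - ↑z.2.2.2.1, z.2.1 - ↑(z.2.2.2.2.1 - z.2.2.2.1),
      z.2.2.1 - ↑(z.2.2.2.2.2.1 - z.2.2.2.1),
      z.2.2.2.2.2.2 - z.2.2.2.2.1 - z.2.2.2.2.2.1 + z.2.2.2.1,
      z.2.2.2.1, z.2.2.2.2.1 - z.2.2.2.1, z.2.2.2.2.2.1 - z.2.2.2.1⟩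
  left_inv z := by
    obtain ⟨y, a, b, w, v1, u, t⟩ := z
    simp only [Prod.mk.injEq]
    refine ⟨?_, ?_, ?_, ?_, ?_, ?_, ?_⟩
    · abel
    · rw [add_sub_cancel_left]; abel
    · rw [add_sub_cancel_left]; abel
    · abel
    · trivial
    · abel
    · abel
  right_inv z := by
    obtain ⟨x, a, b, v1, v2, v3, v4⟩ := z
    simp only [Prod.mk.injEq]
    refine ⟨?_, ?_, ?_, ?_, ?_, ?_, ?_⟩
    · abel
    · push_cast; abel
    · push_cast; abel
    · trivial
    · abel
    · abel
    · abel

end Stmt6Aux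

namespace Stmt6Aux

variable {p n : ℕ} [hp : Fact p.Prime] {V : Submodule (ZMod p) (Vec p n)} [Fintype ↥V]

lemma change_var (q : Vec p n → ZMod p) (φ : Vec p n → Vec p n → ZMod p) :
    (∑ x : Vec p n, ∑ a : Vec p n, ∑ b : Vec p n, ∑ v1 : ↥V, ∑ v2 : ↥V, ∑ v3 : ↥V, ∑ v4 : ↥V,
        omg p (Ef q φ x a b ↑v1 ↑v2 ↑v3 ↑v4))
      = ∑ y : Vec p n, ∑ a : Vec p n, ∑ b : Vec p n, ∑ w : ↥V, ∑ v1 : ↥V, ∑ u : ↥V, ∑ t : ↥V,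
          omg p (Psif q φ y a b ↑w ↑v1 ↑u ↑t) := by
  have h0 : (∑ x : Vec p n, ∑ a : Vec p n, ∑ b : Vec p n, ∑ v1 : ↥V, ∑ v2 : ↥V, ∑ v3 : ↥V,
        ∑ v4 : ↥V, omg p (Ef q φ x a b ↑v1 ↑v2 ↑v3 ↑v4))
      = ∑ z : Vec p n × Vec p n × Vec p n × ↥V × ↥V × ↥V × ↥V,
          omg p (Ef q φ z.1 z.2.1 z.2.2.1 ↑z.2.2.2.1 ↑z.2.2.2.2.1 ↑z.2.2.2.2.2.1
            ↑z.2.2.2.2.2.2) := by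
    simp only [Fintype.sum_prod_type]
  have h1 : (∑ y : Vec p n, ∑ a : Vec p n, ∑ b : Vec p n, ∑ w : ↥V, ∑ v1 : ↥V, ∑ u : ↥V,
        ∑ t : ↥V, omg p (Psif q φ y a b ↑w ↑v1 ↑u ↑t))
      = ∑ z : Vec p n × Vec p n × Vec p n × ↥V × ↥V × ↥V × ↥V,
          omg p (Psif q φ z.1 z.2.1 z.2.2.1 ↑z.2.2.2.1 ↑z.2.2.2.2.1 ↑z.2.2.2.2.2.1
            ↑z.2.2.2.2.2.2) := by
    simp only [Fintype.sum_prod_type]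
  rw [h0, h1]
  rw [← Equiv.sum_comp (e7 V) (fun z => omg p (Ef q φ z.1 z.2.1 z.2.2.1 ↑z.2.2.2.1
    ↑z.2.2.2.2.1 ↑z.2.2.2.2.2.1 ↑z.2.2.2.2.2.2))]
  refine Finset.sum_congr rfl fun z _ => ?_
  obtain ⟨y, a, b, w, v1, u, t⟩ := z
  show omg p (Ef q φ (y + ↑v1) (a + ↑u) (b + ↑t) ↑v1 ↑(v1 + u) ↑(v1 + t)
    ↑(v1 + (t + (u + w)))) = _
  congr 1
  push_cast
  exact E_eq_Psi q φ y a b ↑w ↑v1 ↑u ↑t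

end Stmt6Aux

namespace Stmt6Aux

lemma sum4_mul {α : Type*} [Fintype α] (f g h k : α → ℂ) :
    (∑ a, f a) * ((∑ b, g b) * ((∑ c, h c) * (∑ d, k d)))
      = ∑ a, ∑ b, ∑ c, ∑ d, f a * (g b * (h c * k d)) := by
  simp only [Finset.sum_mul]
  simp only [Finset.mul_sum]

variable {p n : ℕ} [hp : Fact p.Prime] {V : Submodule (ZMod p) (Vec p n)} [Fintype ↥V]

lemma Qpt (q : Vec p n → ZMod p) (φ : Vec p n → Vec p n → ZMod p) (Q : Vec p n → ℂ)
    (hQf : ∀ x, Q x = (∑ v ∈ subFinset V, omg p (q v + φ (x - v) v))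
      / ((subFinset V).card : ℂ)) (x a b : Vec p n) :
    Q x * star (Q (x + a)) * star (Q (x + b)) * Q (x + a + b)
      = (∑ v1 : ↥V, ∑ v2 : ↥V, ∑ v3 : ↥V, ∑ v4 : ↥V,
          omg p (Ef q φ x a b ↑v1 ↑v2 ↑v3 ↑v4)) / ((subFinset V).card : ℂ) ^ 4 := by
  have hQ' : ∀ y, Q y = (∑ v : ↥V, omg p (q ↑v + φ (y - ↑v) ↑v)) / ((subFinset V).card : ℂ) :=
    fun y => by rw [hQf, sum_subFinset]
  have hQs : ∀ y, star (Q y)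
      = (∑ v : ↥V, omg p (-(q ↑v + φ (y - ↑v) ↑v))) / ((subFinset V).card : ℂ) := by
    intro y
    rw [hQ' y, star_div₀, star_sum]
    congr 1
    · exact Finset.sum_congr rfl fun v _ => star_omg p _
    · exact star_natCast _
  have hE : ∀ v1 v2 v3 v4 : ↥V, omg p (Ef q φ x a b ↑v1 ↑v2 ↑v3 ↑v4)
      = omg p (q ↑v1 + φ (x - ↑v1) ↑v1) *
          (omg p (-(q ↑v2 + φ (x + a - ↑v2) ↑v2)) *
            (omg p (-(q ↑v3 + φ (x + b - ↑v3) ↑v3)) *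
              omg p (q ↑v4 + φ (x + a + b - ↑v4) ↑v4))) := by
    intro v1 v2 v3 v4
    unfold Ef
    simp only [omg_add]
  have hnum : (∑ v1 : ↥V, ∑ v2 : ↥V, ∑ v3 : ↥V, ∑ v4 : ↥V,
        omg p (Ef q φ x a b ↑v1 ↑v2 ↑v3 ↑v4))
      = (∑ v : ↥V, omg p (q ↑v + φ (x - ↑v) ↑v)) *
          ((∑ v : ↥V, omg p (-(q ↑v + φ (x + a - ↑v) ↑v))) *
            ((∑ v : ↥V, omg p (-(q ↑v + φ (x + b - ↑v) ↑v))) *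
              (∑ v : ↥V, omg p (q ↑v + φ (x + a + b - ↑v) ↑v)))) := by
    rw [sum4_mul]
    exact Finset.sum_congr rfl fun v1 _ => Finset.sum_congr rfl fun v2 _ =>
      Finset.sum_congr rfl fun v3 _ => Finset.sum_congr rfl fun v4 _ => hE v1 v2 v3 v4
  rw [hQ' x, hQs (x + a), hQs (x + b), hQ' (x + a + b), hnum]
  ring

end Stmt6Aux

namespace Stmt6Aux

variable {p n : ℕ} [hp : Fact p.Prime] {V : Submodule (ZMod p) (Vec p n)} [Fintype ↥V]
  {q : Vec p n → ZMod p} {φ : Vec p n → Vec p n → ZMod p}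

lemma norm_sum_le_card_mul {α : Type*} [Fintype α] (f : α → ℂ) (C : ℝ)
    (h : ∀ i, ‖f i‖ ≤ C) : ‖∑ i : α, f i‖ ≤ (Fintype.card α : ℝ) * C := by
  calc ‖∑ i : α, f i‖ ≤ ∑ i : α, ‖f i‖ := norm_sum_le _ _
    _ ≤ ∑ _i : α, C := Finset.sum_le_sum fun i _ => h i
    _ = (Fintype.card α : ℝ) * C := by
        rw [Finset.sum_const, nsmul_eq_mul, Finset.card_univ]

lemma inner_bound (hq : IsQuadFormOn V q)
    (hφ : ∀ y, ∀ u ∈ V, ∀ v ∈ V, φ y (u + v) = φ y u + φ y v)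
    (y a b : Vec p n) (w : ↥V) :
    ‖∑ v1 : ↥V, ∑ u : ↥V, ∑ t : ↥V, omg p (Psif q φ y a b ↑w ↑v1 ↑u ↑t)‖
      ≤ (Fintype.card ↥V : ℝ) *
          (((subFinset (qRadical V q)).card : ℝ) * (Fintype.card ↥V : ℝ)) := by
  classical
  have hsplit : ∀ v1 u t : ↥V, Psif q φ y a b ↑w ↑v1 ↑u ↑t
      = Af q φ y a b ↑w ↑v1 + (cf q φ y a b ↑w ↑u + Df q φ y a b ↑w ↑u ↑t) :=
    fun v1 u t => Psi_split hq hφ y a b w.2 v1.2 u.2 t.2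
  have hfactor : (∑ v1 : ↥V, ∑ u : ↥V, ∑ t : ↥V, omg p (Psif q φ y a b ↑w ↑v1 ↑u ↑t))
      = (∑ v1 : ↥V, omg p (Af q φ y a b ↑w ↑v1)) *
          (∑ u : ↥V, omg p (cf q φ y a b ↑w ↑u) *
            (∑ t : ↥V, omg p (Df q φ y a b ↑w ↑u ↑t))) := by
    rw [Finset.sum_mul]
    refine Finset.sum_congr rfl fun v1 _ => ?_
    rw [Finset.mul_sum]
    refine Finset.sum_congr rfl fun u _ => ?_
    rw [Finset.mul_sum, Finset.mul_sum]
    refine Finset.sum_congr rfl fun t _ => ?_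
    rw [hsplit v1 u t, omg_add, omg_add]
  rw [hfactor, norm_mul]
  have h1 : ‖∑ v1 : ↥V, omg p (Af q φ y a b ↑w ↑v1)‖ ≤ (Fintype.card ↥V : ℝ) := by
    have := norm_sum_le_card_mul (fun v1 : ↥V => omg p (Af q φ y a b ↑w ↑v1)) 1
      (fun i => le_of_eq (norm_omg p _))
    simpa using this
  have h2 : ‖∑ u : ↥V, omg p (cf q φ y a b ↑w ↑u) *
        (∑ t : ↥V, omg p (Df q φ y a b ↑w ↑u ↑t))‖
      ≤ ((subFinset (qRadical V q)).card : ℝ) * (Fintype.card ↥V : ℝ) := by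
    set P : ↥V → Prop := fun u => ∀ t ∈ V, Df q φ y a b ↑w ↑u t = 0 with hP
    calc ‖∑ u : ↥V, omg p (cf q φ y a b ↑w ↑u) *
          (∑ t : ↥V, omg p (Df q φ y a b ↑w ↑u ↑t))‖
        ≤ ∑ u : ↥V, ‖omg p (cf q φ y a b ↑w ↑u) *
            (∑ t : ↥V, omg p (Df q φ y a b ↑w ↑u ↑t))‖ := norm_sum_le _ _
      _ ≤ ∑ u : ↥V, (if P u then (Fintype.card ↥V : ℝ) else 0) := by
          refine Finset.sum_le_sum fun u _ => ?_
          rw [norm_mul, norm_omg, one_mul]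
          by_cases hc : P u
          · rw [if_pos hc]
            have := norm_sum_le_card_mul (fun t : ↥V => omg p (Df q φ y a b ↑w ↑u ↑t)) 1
              (fun i => le_of_eq (norm_omg p _))
            simpa using this
          · rw [if_neg hc]
            simp only [hP] at hc
            push_neg at hc
            obtain ⟨t0, ht0, hne⟩ := hc
            have hadd : ∀ s ∈ V, ∀ t ∈ V, Df q φ y a b ↑w ↑u (s + t)
                = Df q φ y a b ↑w ↑u s + Df q φ y a b ↑w ↑u t := by
              intro s hs t ht
              unfold Df
              rw [qbeta_add_left hq hs ht (V.add_mem u.2 w.2),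
                hφ (y + a + b - ↑w) s hs t ht, hφ (y + b) s hs t ht]
              ring
            rw [char_sum_zero V _ hadd t0 ht0 hne, norm_zero]
      _ = ∑ u ∈ Finset.univ.filter P, (Fintype.card ↥V : ℝ) := by
          rw [Finset.sum_filter]
      _ = ((Finset.univ.filter P).card : ℝ) * (Fintype.card ↥V : ℝ) := by
          rw [Finset.sum_const, nsmul_eq_mul]
      _ ≤ ((subFinset (qRadical V q)).card : ℝ) * (Fintype.card ↥V : ℝ) := by
          have hcount := counting hq w.2
            (fun t => φ (y + a + b - ↑w) t - φ (y + b) t) P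
            (fun u hu t ht => by
              have := hu t ht
              unfold Df at this
              linear_combination this)
          exact mul_le_mul_of_nonneg_right (by exact_mod_cast hcount) (by positivity)
  exact mul_le_mul h1 h2 (norm_nonneg _) (by positivity)

end Stmt6Aux


/-- Lemma 3.4. A quadratic average of rank `r` has `U²` norm at most
`p^{-r/4}`. -/
theorem stmt6 (p : ℕ) [Fact p.Prime] (n : ℕ) (V : Submodule (ZMod p) (Vec p n))
    (q : Vec p n → ZMod p) (Q : Vec p n → ℂ) (r : ℕ)
    (hQ : IsQuadAvgWith V q Q) (hr : qRank V q = r) :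
    U2 Q ≤ (p : ℝ) ^ (-(r : ℝ) / 4) := by
  obtain ⟨hq, φ, hφ, hQf⟩ := hQ
  classical
  letI : Fintype ↥V := Fintype.ofFinite _
  letI : Fintype ↥(qRadical V q) := Fintype.ofFinite _
  have hppos : (0 : ℝ) < (p : ℝ) := by exact_mod_cast (Fact.out : p.Prime).pos
  have hNq : (subFinset V).card = Fintype.card ↥V := card_subFinset V
  have hNpos : (0 : ℕ) < Fintype.card ↥V := Fintype.card_pos
  have hMpos : (0 : ℕ) < Fintype.card (Vec p n) := Fintype.card_pos
  -- Step 1: rewrite the average as a big sum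
  have hS : avgC (fun t : Vec p n × Vec p n × Vec p n =>
        Q t.1 * star (Q (t.1 + t.2.1)) * star (Q (t.1 + t.2.2)) *
          Q (t.1 + t.2.1 + t.2.2))
      = (∑ y : Vec p n, ∑ a : Vec p n, ∑ b : Vec p n, ∑ w : ↥V, ∑ v1 : ↥V, ∑ u : ↥V,
            ∑ t : ↥V, omg p (Stmt6Aux.Psif q φ y a b ↑w ↑v1 ↑u ↑t))
          / ((Fintype.card (Vec p n) : ℂ) ^ 3 * (Fintype.card ↥V : ℂ) ^ 4) := by
    rw [avgC]
    have hcard : (Fintype.card (Vec p n × Vec p n × Vec p n) : ℂ)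
        = (Fintype.card (Vec p n) : ℂ) ^ 3 := by
      simp [Fintype.card_prod]; ring
    have hsum : (∑ t : Vec p n × Vec p n × Vec p n,
          Q t.1 * star (Q (t.1 + t.2.1)) * star (Q (t.1 + t.2.2)) *
            Q (t.1 + t.2.1 + t.2.2))
        = (∑ x : Vec p n, ∑ a : Vec p n, ∑ b : Vec p n, ∑ v1 : ↥V, ∑ v2 : ↥V, ∑ v3 : ↥V,
            ∑ v4 : ↥V, omg p (Stmt6Aux.Ef q φ x a b ↑v1 ↑v2 ↑v3 ↑v4))
            / (Fintype.card ↥V : ℂ) ^ 4 := by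
      simp only [Fintype.sum_prod_type]
      rw [Finset.sum_div]
      refine Finset.sum_congr rfl fun x _ => ?_
      rw [Finset.sum_div]
      refine Finset.sum_congr rfl fun a _ => ?_
      rw [Finset.sum_div]
      refine Finset.sum_congr rfl fun b _ => ?_
      have := Stmt6Aux.Qpt q φ Q hQf x a b
      rw [hNq] at this
      exact this
    rw [hsum, Stmt6Aux.change_var q φ, hcard, div_div, mul_comm]
  -- Step 2: bound the norm of the big sum
  have hb : ‖(∑ y : Vec p n, ∑ a : Vec p n, ∑ b : Vec p n, ∑ w : ↥V, ∑ v1 : ↥V, ∑ u : ↥V,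
        ∑ t : ↥V, omg p (Stmt6Aux.Psif q φ y a b ↑w ↑v1 ↑u ↑t))‖
      ≤ (Fintype.card (Vec p n) : ℝ) * ((Fintype.card (Vec p n) : ℝ) *
          ((Fintype.card (Vec p n) : ℝ) * ((Fintype.card ↥V : ℝ) *
            ((Fintype.card ↥V : ℝ) * (((subFinset (qRadical V q)).card : ℝ) *
              (Fintype.card ↥V : ℝ)))))) := by
    refine Stmt6Aux.norm_sum_le_card_mul _ _ fun y => ?_
    refine Stmt6Aux.norm_sum_le_card_mul _ _ fun a => ?_
    refine Stmt6Aux.norm_sum_le_card_mul _ _ fun b => ?_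
    refine Stmt6Aux.norm_sum_le_card_mul _ _ fun w => ?_
    exact Stmt6Aux.inner_bound hq hφ y a b w
  -- Step 3: `‖S‖ ≤ R / N`
  have hSnorm : ‖avgC (fun t : Vec p n × Vec p n × Vec p n =>
        Q t.1 * star (Q (t.1 + t.2.1)) * star (Q (t.1 + t.2.2)) *
          Q (t.1 + t.2.1 + t.2.2))‖
      ≤ ((subFinset (qRadical V q)).card : ℝ) / (Fintype.card ↥V : ℝ) := by
    rw [hS, norm_div, norm_mul, norm_pow, norm_pow, Complex.norm_natCast,
      Complex.norm_natCast]
    have hden : (0 : ℝ) < (Fintype.card (Vec p n) : ℝ) ^ 3 * (Fintype.card ↥V : ℝ) ^ 4 := by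
      positivity
    rw [div_le_div_iff₀ hden (by positivity : (0:ℝ) < (Fintype.card ↥V : ℝ))]
    calc ‖_‖ * (Fintype.card ↥V : ℝ)
        ≤ ((Fintype.card (Vec p n) : ℝ) * ((Fintype.card (Vec p n) : ℝ) *
            ((Fintype.card (Vec p n) : ℝ) * ((Fintype.card ↥V : ℝ) *
              ((Fintype.card ↥V : ℝ) * (((subFinset (qRadical V q)).card : ℝ) *
                (Fintype.card ↥V : ℝ))))))) * (Fintype.card ↥V : ℝ) :=
          mul_le_mul_of_nonneg_right hb (by positivity)
      _ = ((subFinset (qRadical V q)).card : ℝ) *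
            ((Fintype.card (Vec p n) : ℝ) ^ 3 * (Fintype.card ↥V : ℝ) ^ 4) := by ring
  -- Step 4: identify R / N with p ^ (-r)
  have hcardV : Fintype.card ↥V = p ^ (Module.finrank (ZMod p) ↥V) := by
    rw [Module.card_eq_pow_finrank (K := ZMod p) (V := ↥V), ZMod.card]
  have hcardR : (subFinset (qRadical V q)).card
      = p ^ (Module.finrank (ZMod p) ↥(qRadical V q)) := by
    rw [card_subFinset, Module.card_eq_pow_finrank (K := ZMod p), ZMod.card]
  have hle : Module.finrank (ZMod p) ↥(qRadical V q) ≤ Module.finrank (ZMod p) ↥V := by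
    apply Submodule.finrank_mono
    rw [qRadical, Submodule.span_le]
    intro v hv
    exact hv.1
  have hdim : Module.finrank (ZMod p) ↥V
      = r + Module.finrank (ZMod p) ↥(qRadical V q) := by
    rw [qRank] at hr
    omega
  have hfin : ((subFinset (qRadical V q)).card : ℝ) / (Fintype.card ↥V : ℝ)
      = ((p : ℝ) ^ r)⁻¹ := by
    rw [hcardV, hcardR, hdim, pow_add]
    push_cast
    rw [div_eq_iff (by positivity)]
    field_simp
  -- Step 5: conclude via rpow monotonicity
  have key : ‖avgC (fun t : Vec p n × Vec p n × Vec p n =>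
        Q t.1 * star (Q (t.1 + t.2.1)) * star (Q (t.1 + t.2.2)) *
          Q (t.1 + t.2.1 + t.2.2))‖ ≤ ((p : ℝ) ^ r)⁻¹ := hfin ▸ hSnorm
  rw [U2]
  calc ‖avgC (fun t : Vec p n × Vec p n × Vec p n =>
        Q t.1 * star (Q (t.1 + t.2.1)) * star (Q (t.1 + t.2.2)) *
          Q (t.1 + t.2.1 + t.2.2))‖ ^ ((1:ℝ)/4)
      ≤ (((p : ℝ) ^ r)⁻¹) ^ ((1:ℝ)/4) :=
        Real.rpow_le_rpow (norm_nonneg _) key (by norm_num)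
    _ = (p : ℝ) ^ (-(r : ℝ) / 4) := by
        rw [← Real.rpow_natCast (p : ℝ) r, ← Real.rpow_neg hppos.le,
          ← Real.rpow_mul hppos.le]
        congr 1
        ring
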